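/- arXiv:1205.1607 — 2 statements merged into one kernel-verified Lean document; each statement's English description precedes it below -/
import Mathlib

section
/- Let V(n,k) be the set of configurations reachable from the all-filled configuration without exceeding n simultaneous zeros and containing exactly k zeros, and let ℓ̃(n,k) be the maximal distance of a zero from the right boundary over V(n,k). Then ℓ̃(n,k) is nondecreasing in k for 0 ≤ k ≤ n, and ℓ̃(n,1) = ℓ̃(n−1,n−1) + 1 for n ≥ 1. -/
/-- One legal East move on the half line `(-∞,-1]` with a frozen vacancy at the origin `0`:
configurations are encoded by the finite set of empty sites, a flip at `x ≤ -1` is legal iff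
`x+1` is empty (the neighbour of `-1` being the frozen vacancy), and the resulting
configuration must have at most `n` empty sites. -/
def EastStep (n : ℕ) (s s' : Finset ℤ) : Prop :=
  (∃ x : ℤ, x ≤ -1 ∧ (x = -1 ∨ (x + 1) ∈ s) ∧
      ((x ∉ s ∧ s' = insert x s) ∨ (x ∈ s ∧ s' = s.erase x))) ∧ s'.card ≤ n

/-- Reachability from the fully occupied configuration without ever exceeding `n`
simultaneous empty sites. -/
def EastReach (n : ℕ) (s : Finset ℤ) : Prop :=
  Relation.ReflTransGen (EastStep n) ∅ s

/-- `V(n,k)`: configurations reachable without exceeding `n` simultaneous zeros and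
containing exactly `k` zeros. -/
def Vnk (n k : ℕ) (s : Finset ℤ) : Prop :=
  EastReach n s ∧ s.card = k

/-- `ℓ̃(n,k)`: the maximal distance from the origin of a zero over all configurations in
`V(n,k)` (with the convention `sup ∅ = 0`). -/
noncomputable def ellT (n k : ℕ) : ℕ :=
  sSup {m : ℕ | ∃ s : Finset ℤ, Vnk n k s ∧ -(m : ℤ) ∈ s}

namespace EastAux

open Finset

/-- The set whose supremum is `ellT n k`. -/
def S (n k : ℕ) : Set ℕ := {m : ℕ | ∃ s : Finset ℤ, Vnk n k s ∧ -(m : ℤ) ∈ s}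

lemma ellT_eq (n k : ℕ) : ellT n k = sSup (S n k) := rfl

/-- Along a reachable path all cards are at most `n`. -/
lemma card_le {n : ℕ} {s : Finset ℤ} (h : EastReach n s) : s.card ≤ n := by
  induction h with
  | refl => simp
  | tail _ step _ => exact step.2

/-- All empty sites of a reachable configuration lie in `(-∞,-1]`. -/
lemma neg_mem {n : ℕ} {s : Finset ℤ} (h : EastReach n s) : ∀ x ∈ s, x ≤ -1 := by
  induction h with
  | refl => intro x hx; simp at hx
  | tail _ step ih =>
    obtain ⟨⟨x, hx1, _, hcase⟩, _⟩ := step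
    intro y hy
    rcases hcase with ⟨_, rfl⟩ | ⟨_, rfl⟩
    · rcases Finset.mem_insert.mp hy with rfl | hy'
      · exact hx1
      · exact ih y hy'
    · exact ih y (Finset.mem_of_mem_erase hy)

/-- A single step can be reversed (provided the source also has card ≤ n). -/
lemma step_symm {n : ℕ} {a b : Finset ℤ} (h : EastStep n a b) (ha : a.card ≤ n) :
    EastStep n b a := by
  obtain ⟨⟨x, hx1, hleg, hcase⟩, _⟩ := h
  rcases hcase with ⟨hxa, rfl⟩ | ⟨hxa, rfl⟩
  · refine ⟨⟨x, hx1, ?_, Or.inr ⟨Finset.mem_insert_self _ _, (Finset.erase_insert hxa).symm⟩⟩, ha⟩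
    rcases hleg with h1 | h1
    · exact Or.inl h1
    · exact Or.inr (Finset.mem_insert_of_mem h1)
  · refine ⟨⟨x, hx1, ?_, Or.inl ⟨Finset.notMem_erase _ _, (Finset.insert_erase hxa).symm⟩⟩, ha⟩
    rcases hleg with h1 | h1
    · exact Or.inl h1
    · exact Or.inr (Finset.mem_erase.mpr ⟨by omega, h1⟩)

/-- Reachability can be reversed: there is a legal path back to `∅`. -/
lemma reach_rev {n : ℕ} {s : Finset ℤ} (h : EastReach n s) :
    Relation.ReflTransGen (EastStep n) s ∅ := by
  induction h with
  | refl => exact .refl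
  | tail hab step ih => exact .head (step_symm step (card_le hab)) ih

lemma reach_mono {n n' : ℕ} (hn : n ≤ n') {s : Finset ℤ} (h : EastReach n s) : EastReach n' s := by
  induction h with
  | refl => exact .refl
  | tail _ step ih => exact .tail ih ⟨step.1, le_trans step.2 hn⟩

/-- Restriction to the region strictly above a site is again reachable. -/
lemma reach_filter_gt {n : ℕ} {s : Finset ℤ} (c : ℤ) (h : EastReach n s) :
    EastReach n (s.filter (fun y => c < y)) := by
  induction h with
  | refl => simp only [Finset.filter_empty]; exact Relation.ReflTransGen.refl
  | tail _ step ih =>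
    obtain ⟨⟨x, hx1, hleg, hcase⟩, hcard⟩ := step
    by_cases hxc : c < x
    · rcases hcase with ⟨hxs, rfl⟩ | ⟨hxs, rfl⟩
      · refine ih.tail ⟨⟨x, hx1, ?_, Or.inl ⟨by simp [Finset.mem_filter, hxs], ?_⟩⟩, ?_⟩
        · rcases hleg with h1 | h1
          · exact Or.inl h1
          · exact Or.inr (Finset.mem_filter.mpr ⟨h1, by omega⟩)
        · rw [Finset.filter_insert, if_pos hxc]
        · exact le_trans (Finset.card_filter_le _ _) hcard
      · refine ih.tail ⟨⟨x, hx1, ?_, Or.inr ⟨Finset.mem_filter.mpr ⟨hxs, hxc⟩, ?_⟩⟩, ?_⟩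
        · rcases hleg with h1 | h1
          · exact Or.inl h1
          · exact Or.inr (Finset.mem_filter.mpr ⟨h1, by omega⟩)
        · rw [Finset.filter_erase]
        · exact le_trans (Finset.card_filter_le _ _) hcard
    · rcases hcase with ⟨hxs, rfl⟩ | ⟨hxs, rfl⟩
      · rwa [Finset.filter_insert, if_neg hxc]
      · rw [Finset.filter_erase, Finset.erase_eq_of_notMem
          (fun hmem => hxc (Finset.mem_filter.mp hmem).2)]
        exact ih

/-- Key invariant: the part of a reachable configuration strictly below a fixed site `b`,
shifted so that `b` becomes the origin, is itself reachable (or empty). -/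
lemma below_shift {n : ℕ} {s : Finset ℤ} (b : ℤ) (hb : b ≤ -1) (h : EastReach n s) :
    s.filter (fun y => y < b) = ∅ ∨
      EastReach n ((s.filter (fun y => y < b)).image (fun y => y - b)) := by
  have hinj : Function.Injective (fun y : ℤ => y - b) := fun u v huv => by simpa using huv
  induction h with
  | refl => left; simp
  | @tail t u _ step ih =>
    obtain ⟨⟨x, hx1, hleg, hcase⟩, hcard⟩ := step
    by_cases hxb : x < b
    · -- the flip happens strictly below b
      have hxne : x ≠ -1 := by omega
      have hx1m : x + 1 ∈ t := hleg.resolve_left hxne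
      rcases ih with hemp | hreach
      · -- region below b was empty: the flip must be an insertion at b-1
        rcases hcase with ⟨hxs, rfl⟩ | ⟨hxs, rfl⟩
        · have hxb1 : x + 1 = b := by
            rcases lt_or_eq_of_le (by omega : x + 1 ≤ b) with hlt | he
            · exact absurd (Finset.mem_filter.mpr ⟨hx1m, hlt⟩ :
                  x + 1 ∈ t.filter (fun y => y < b)) (by simp [hemp])
            · exact he
          right
          have h1n : 1 ≤ n := by
            have h0 : 0 < (insert x t).card :=
              Finset.card_pos.mpr ⟨x, Finset.mem_insert_self _ _⟩
            omega
          have himg : ((insert x t).filter (fun y => y < b)).image (fun y => y - b)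
              = {(-1 : ℤ)} := by
            rw [Finset.filter_insert, if_pos hxb, hemp]
            have : x - b = -1 := by omega
            simp [this]
          rw [himg]
          refine Relation.ReflTransGen.single
            ⟨⟨-1, le_refl _, Or.inl rfl, Or.inl ⟨by simp, by simp⟩⟩, by simpa using h1n⟩
        · exact absurd (Finset.mem_filter.mpr ⟨hxs, hxb⟩ :
              x ∈ t.filter (fun y => y < b)) (by simp [hemp])
      · -- region below b already reachable: perform the shifted flip
        right
        have hlegs : (x - b = -1) ∨
            (x - b + 1) ∈ (t.filter (fun y => y < b)).image (fun y => y - b) := by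
          rcases lt_or_eq_of_le (by omega : x + 1 ≤ b) with hlt | he
          · exact Or.inr (Finset.mem_image.mpr ⟨x + 1, Finset.mem_filter.mpr ⟨hx1m, hlt⟩, by ring⟩)
          · exact Or.inl (by omega)
        rcases hcase with ⟨hxs, rfl⟩ | ⟨hxs, rfl⟩
        · have hnotmem : x - b ∉ (t.filter (fun y => y < b)).image (fun y => y - b) := by
            intro hmem
            obtain ⟨y, hy, hyx⟩ := Finset.mem_image.mp hmem
            have hyx' : y = x := by omega
            exact hxs (hyx' ▸ (Finset.mem_filter.mp hy).1)
          have heq : ((insert x t).filter (fun y => y < b)).image (fun y => y - b)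
              = insert (x - b) ((t.filter (fun y => y < b)).image (fun y => y - b)) := by
            rw [Finset.filter_insert, if_pos hxb, Finset.image_insert]
          rw [heq]
          have hcardle : (insert (x - b) ((t.filter (fun y => y < b)).image (fun y => y - b))).card ≤ n := by
            have h1 : ((t.filter (fun y => y < b)).image (fun y => y - b)).card ≤ t.card :=
              le_trans Finset.card_image_le (Finset.card_filter_le _ _)
            have h2 : (insert x t).card = t.card + 1 := Finset.card_insert_of_notMem hxs
            have h3 := Finset.card_insert_le (x - b) ((t.filter (fun y => y < b)).image (fun y => y - b))
            omega
          exact hreach.tail ⟨⟨x - b, by omega, hlegs, Or.inl ⟨hnotmem, rfl⟩⟩, hcardle⟩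
        · have heq : ((t.erase x).filter (fun y => y < b)).image (fun y => y - b)
              = ((t.filter (fun y => y < b)).image (fun y => y - b)).erase (x - b) := by
            rw [Finset.filter_erase, Finset.image_erase hinj]
          rw [heq]
          have hcardle : (((t.filter (fun y => y < b)).image (fun y => y - b)).erase (x - b)).card ≤ n := by
            have h1 : ((t.filter (fun y => y < b)).image (fun y => y - b)).card ≤ t.card :=
              le_trans Finset.card_image_le (Finset.card_filter_le _ _)
            have h2 : (t.erase x).card = t.card - 1 := Finset.card_erase_of_mem hxs
            have h3 : 0 < t.card := Finset.card_pos.mpr ⟨x, hxs⟩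
            have h4 : (((t.filter (fun y => y < b)).image (fun y => y - b)).erase (x - b)).card
                = ((t.filter (fun y => y < b)).image (fun y => y - b)).card - 1 :=
              Finset.card_erase_of_mem
                (Finset.mem_image.mpr ⟨x, Finset.mem_filter.mpr ⟨hxs, hxb⟩, rfl⟩)
            have h5 : 0 < ((t.filter (fun y => y < b)).image (fun y => y - b)).card :=
              Finset.card_pos.mpr ⟨x - b, Finset.mem_image.mpr ⟨x, Finset.mem_filter.mpr ⟨hxs, hxb⟩, rfl⟩⟩
            omega
          exact hreach.tail ⟨⟨x - b, by omega, hlegs,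
            Or.inr ⟨Finset.mem_image.mpr ⟨x, Finset.mem_filter.mpr ⟨hxs, hxb⟩, rfl⟩, rfl⟩⟩, hcardle⟩
    · -- the flip happens at or above b: the part below b is unchanged
      rcases hcase with ⟨hxs, rfl⟩ | ⟨hxs, rfl⟩
      · rwa [Finset.filter_insert, if_neg hxb]
      · have hnm : x ∉ t.filter (fun y => y < b) :=
          fun hmem => hxb (Finset.mem_filter.mp hmem).2
        rw [Finset.filter_erase, Finset.erase_eq_of_notMem hnm]
        exact ih

/-- Single-vacancy reduction: if a lone vacancy at `z ≤ -2` is reachable with budget `n`,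
then some configuration containing `z+1` is reachable with budget `n-1`. -/
lemma reduce {n : ℕ} {z : ℤ} (hz2 : z ≤ -2) (h : EastReach n {z}) :
    ∃ w : Finset ℤ, EastReach (n - 1) w ∧ z + 1 ∈ w := by
  have hrev : Relation.ReflTransGen (EastStep n) {z} ∅ := reach_rev h
  suffices aux : ∀ t : Finset ℤ, Relation.ReflTransGen (EastStep n) t ∅ →
      z ∈ t → EastReach (n - 1) (t.filter (fun y => z < y)) →
      ∃ w : Finset ℤ, EastReach (n - 1) w ∧ z + 1 ∈ w by
    refine aux {z} hrev (Finset.mem_singleton_self z) ?_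
    have : ({z} : Finset ℤ).filter (fun y => z < y) = ∅ := by
      rw [Finset.filter_singleton, if_neg (by omega)]
    rw [this]
    exact Relation.ReflTransGen.refl
  intro t htr
  induction htr using Relation.ReflTransGen.head_induction_on with
  | refl => intro hz _; simp at hz
  | @head t u step tail ih =>
    intro hzt hreach
    obtain ⟨⟨x, hx1, hleg, hcase⟩, hcard⟩ := step
    by_cases hxz : x = z
    · subst hxz
      rcases hcase with ⟨hxs, _⟩ | ⟨_, _⟩
      · exact absurd hzt hxs
      · -- the lone deep vacancy is being erased: harvest its support
        have hx1t : x + 1 ∈ t := hleg.resolve_left (by omega)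
        exact ⟨t.filter (fun y => x < y), hreach,
          Finset.mem_filter.mpr ⟨hx1t, by omega⟩⟩
    · -- flip elsewhere: the invariant is preserved
      have hzu : z ∈ u := by
        rcases hcase with ⟨_, rfl⟩ | ⟨_, rfl⟩
        · exact Finset.mem_insert_of_mem hzt
        · exact Finset.mem_erase.mpr ⟨fun hh => hxz hh.symm, hzt⟩
      refine ih hzu ?_
      by_cases hzx : z < x
      · -- flip in the region above z: mirror it with budget n-1
        have hfb : (u.filter (fun y => z < y)).card ≤ n - 1 := by
          have hsub : u.filter (fun y => z < y) ⊆ u.erase z := by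
            intro y hy
            obtain ⟨hy1, hy2⟩ := Finset.mem_filter.mp hy
            exact Finset.mem_erase.mpr ⟨by omega, hy1⟩
          have h1 := Finset.card_le_card hsub
          have h2 : (u.erase z).card = u.card - 1 := Finset.card_erase_of_mem hzu
          have h3 : 0 < u.card := Finset.card_pos.mpr ⟨z, hzu⟩
          omega
        have hlegf : x = -1 ∨ x + 1 ∈ t.filter (fun y => z < y) := by
          rcases hleg with h1 | h1
          · exact Or.inl h1
          · exact Or.inr (Finset.mem_filter.mpr ⟨h1, by omega⟩)
        rcases hcase with ⟨hxs, rfl⟩ | ⟨hxs, rfl⟩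
        · have heq : (insert x t).filter (fun y => z < y)
              = insert x (t.filter (fun y => z < y)) := by
            rw [Finset.filter_insert, if_pos hzx]
          rw [heq] at hfb ⊢
          exact hreach.tail ⟨⟨x, hx1, hlegf,
            Or.inl ⟨fun hm => hxs (Finset.mem_filter.mp hm).1, rfl⟩⟩, hfb⟩
        · have heq : (t.erase x).filter (fun y => z < y)
              = (t.filter (fun y => z < y)).erase x := by rw [Finset.filter_erase]
          rw [heq] at hfb ⊢
          exact hreach.tail ⟨⟨x, hx1, hlegf,
            Or.inr ⟨Finset.mem_filter.mpr ⟨hxs, hzx⟩, rfl⟩⟩, hfb⟩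
      · -- flip strictly below z: the region above z is unchanged
        rcases hcase with ⟨hxs, rfl⟩ | ⟨hxs, rfl⟩
        · rwa [Finset.filter_insert, if_neg hzx]
        · have hnm : x ∉ t.filter (fun y => z < y) :=
            fun hm => hzx (Finset.mem_filter.mp hm).2
          rwa [Finset.filter_erase, Finset.erase_eq_of_notMem hnm]

/-- One can always add extra vacancies to a reachable configuration (room permitting). -/
lemma add_zeros {n : ℕ} {s : Finset ℤ} (h : EastReach n s) :
    ∀ j : ℕ, s.card + j ≤ n →
      ∃ s' : Finset ℤ, EastReach n s' ∧ s'.card = s.card + j ∧ s ⊆ s' := by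
  intro j
  induction j with
  | zero => exact fun _ => ⟨s, h, by simp, Finset.Subset.refl s⟩
  | succ j ih =>
    intro hj
    obtain ⟨s', h', hc', hsub⟩ := ih (by omega)
    rcases s'.eq_empty_or_nonempty with rfl | hne
    · -- s' empty, insert -1
      have hs0 : s = ∅ := Finset.subset_empty.mp hsub
      refine ⟨{(-1 : ℤ)}, Relation.ReflTransGen.single
        ⟨⟨-1, le_refl _, Or.inl rfl, Or.inl ⟨by simp, by simp⟩⟩, ?_⟩, ?_, ?_⟩
      · simpa using by omega
      · simp [hs0] at hc' ⊢; omega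
      · simp [hs0]
    · set x := s'.min' hne - 1 with hxdef
      have hmin : s'.min' hne ∈ s' := s'.min'_mem hne
      have hminle : s'.min' hne ≤ -1 := neg_mem h' _ hmin
      have hxns : x ∉ s' := by
        intro hxmem
        have := s'.min'_le x hxmem
        omega
      refine ⟨insert x s', h'.tail ⟨⟨x, by omega, Or.inr (by simpa [hxdef] using hmin), Or.inl ⟨hxns, rfl⟩⟩, ?_⟩, ?_, ?_⟩
      · rw [Finset.card_insert_of_notMem hxns]; omega
      · rw [Finset.card_insert_of_notMem hxns]; omega
      · exact hsub.trans (Finset.subset_insert _ _)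

/-- Monotonicity of `sSup (S n ·)` given upper bounds. -/
lemma mono_aux {n : ℕ} (hB : ∀ j, BddAbove (S n j)) {k k' : ℕ}
    (hkk' : k ≤ k') (hk'n : k' ≤ n) : sSup (S n k) ≤ sSup (S n k') := by
  refine csSup_le' ?_
  rintro m ⟨s, ⟨hr, hcard⟩, hm⟩
  obtain ⟨s', h', hc', hsub⟩ := add_zeros hr (k' - k) (by omega)
  exact le_csSup (hB k') ⟨s', ⟨h', by omega⟩, hsub hm⟩

/-- Upper bound for a lone vacancy: at most one beyond the best `(n-1)`-budget depth. -/
lemma upper1' {N : ℕ} (ihN : ∀ j, BddAbove (S N j)) :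
    ∀ m ∈ S (N + 1) 1, m ≤ sSup (S N N) + 1 := by
  rintro m ⟨s, ⟨hr, hc⟩, hm⟩
  by_cases h2 : m ≤ 1
  · omega
  · obtain ⟨z, rfl⟩ := Finset.card_eq_one.mp hc
    have hz : z = -(m : ℤ) := (Finset.mem_singleton.mp hm).symm
    have hz2 : z ≤ -2 := by omega
    obtain ⟨w, hw, hwm⟩ := reduce hz2 hr
    simp only [Nat.add_sub_cancel] at hw
    have hcast : -(((m - 1 : ℕ) : ℤ)) = z + 1 := by omega
    have hmem : (m - 1 : ℕ) ∈ S N w.card := ⟨w, ⟨hw, rfl⟩, hcast ▸ hwm⟩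
    have h3 := le_csSup (ihN w.card) hmem
    have h4 := mono_aux ihN (card_le hw) (le_refl N)
    omega

/-- Every `S n k` is bounded above. -/
lemma bddS : ∀ n k, BddAbove (S n k) := by
  intro n
  induction n with
  | zero =>
    intro k
    refine ⟨0, ?_⟩
    rintro m ⟨s, ⟨hr, _⟩, hm⟩
    have h0 := card_le hr
    rw [Finset.card_eq_zero.mp (le_antisymm h0 (Nat.zero_le _))] at hm
    simp at hm
  | succ N ihN =>
    have h1 : BddAbove (S (N + 1) 1) :=
      ⟨sSup (S N N) + 1, fun m hm => upper1' ihN m hm⟩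
    intro k
    induction k with
    | zero =>
      refine ⟨0, ?_⟩
      rintro m ⟨s, ⟨hr, hc⟩, hm⟩
      rw [Finset.card_eq_zero.mp hc] at hm
      simp at hm
    | succ k ihk =>
      rcases k with _ | k
      · exact h1
      · refine ⟨sSup (S (N + 1) (k + 1)) + sSup (S (N + 1) 1), ?_⟩
        rintro m ⟨s, ⟨hr, hc⟩, hm⟩
        have hne : s.Nonempty := Finset.card_pos.mp (by omega)
        set x₁ := s.min' hne with hx1def
        have hx1mem : x₁ ∈ s := s.min'_mem hne
        have herase : s.filter (fun y => x₁ < y) = s.erase x₁ := by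
          ext y
          simp only [Finset.mem_filter, Finset.mem_erase]
          constructor
          · rintro ⟨hy, hlt⟩; exact ⟨by omega, hy⟩
          · rintro ⟨hne', hy⟩
            exact ⟨hy, lt_of_le_of_ne (s.min'_le y hy) (Ne.symm hne')⟩
        have hr2 : EastReach (N + 1) (s.erase x₁) := herase ▸ reach_filter_gt x₁ hr
        have hc2 : (s.erase x₁).card = k + 1 := by
          rw [Finset.card_erase_of_mem hx1mem]; omega
        have hne2 : (s.erase x₁).Nonempty := Finset.card_pos.mp (by omega)
        set x₂ := (s.erase x₁).min' hne2 with hx2def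
        have hx2mem : x₂ ∈ s.erase x₁ := Finset.min'_mem _ hne2
        have hx2s : x₂ ∈ s := Finset.mem_of_mem_erase hx2mem
        have hx12 : x₁ < x₂ :=
          lt_of_le_of_ne (s.min'_le x₂ hx2s) (Ne.symm (Finset.ne_of_mem_erase hx2mem))
        have hx2le : x₂ ≤ -1 := neg_mem hr _ hx2s
        have hfilt : s.filter (fun y => y < x₂) = {x₁} := by
          ext y
          simp only [Finset.mem_filter, Finset.mem_singleton]
          constructor
          · rintro ⟨hy, hlt⟩
            by_contra hne'
            have hyy : y ∈ s.erase x₁ := Finset.mem_erase.mpr ⟨hne', hy⟩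
            have := Finset.min'_le _ y hyy
            omega
          · rintro rfl; exact ⟨hx1mem, hx12⟩
        rcases below_shift x₂ hx2le hr with hemp | hsh
        · rw [hfilt] at hemp; simp at hemp
        · rw [hfilt, Finset.image_singleton] at hsh
          have hgapmem : ((x₂ - x₁).toNat) ∈ S (N + 1) 1 := by
            refine ⟨{x₁ - x₂}, ⟨hsh, Finset.card_singleton _⟩, ?_⟩
            simp only [Finset.mem_singleton]
            omega
          have hx2natmem : ((-x₂).toNat) ∈ S (N + 1) (k + 1) := by
            refine ⟨s.erase x₁, ⟨hr2, hc2⟩, ?_⟩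
            have hco : -(((-x₂).toNat : ℤ)) = x₂ := by omega
            rw [hco]; exact hx2mem
          have h5 := le_csSup ihk hx2natmem
          have h6 := le_csSup h1 hgapmem
          have hx1le : x₁ ≤ -(m : ℤ) := s.min'_le _ hm
          omega

/-- Depth bound for elements of reachable configurations. -/
lemma depth_le {n : ℕ} {t : Finset ℤ} (ht : EastReach n t) {y : ℤ} (hy : y ∈ t) :
    -y ≤ ((sSup (S n n) : ℕ) : ℤ) := by
  have hy1 : y ≤ -1 := neg_mem ht _ hy
  have hmem : ((-y).toNat) ∈ S n t.card := by
    refine ⟨t, ⟨ht, rfl⟩, ?_⟩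
    have hco : -(((-y).toNat : ℤ)) = y := by omega
    rw [hco]; exact hy
  have h1 := le_csSup (bddS n t.card) hmem
  have h2 := mono_aux (bddS n) (card_le ht) (le_refl n)
  omega

/-- Reversing an `N`-budget path while keeping an extra deep vacancy frozen. -/
lemma rev_lift {N : ℕ} {x₀ : ℤ} (hx₀ : x₀ = -(((sSup (S N N) : ℕ) : ℤ) + 1)) :
    ∀ t : Finset ℤ, Relation.ReflTransGen (EastStep N) ∅ t →
      Relation.ReflTransGen (EastStep (N + 1)) (insert x₀ t) {x₀} := by
  subst hx₀
  intro t h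
  induction h with
  | refl =>
    have he : insert (-(((sSup (S N N) : ℕ) : ℤ) + 1)) (∅ : Finset ℤ)
        = {-(((sSup (S N N) : ℕ) : ℤ) + 1)} := by simp
    rw [he]
  | @tail b c hab hbc ih =>
    set x₀ : ℤ := -(((sSup (S N N) : ℕ) : ℤ) + 1) with hx0def
    have hreachb : EastReach N b := hab
    have hreachc : EastReach N c := hab.tail hbc
    refine Relation.ReflTransGen.head ?_ ih
    obtain ⟨⟨x, hx1, hleg, hcase⟩, hcard⟩ := hbc
    have hboundb : ∀ y ∈ b, x₀ < y := by
      intro y hy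
      have := depth_le hreachb hy
      omega
    have hboundc : ∀ y ∈ c, x₀ < y := by
      intro y hy
      have := depth_le hreachc hy
      omega
    have hx0b : x₀ ∉ b := fun hmem => lt_irrefl x₀ (hboundb _ hmem)
    have hcardb : b.card ≤ N := card_le hreachb
    have hcardi : (insert x₀ b).card ≤ N + 1 :=
      le_trans (Finset.card_insert_le _ _) (by omega)
    rcases hcase with ⟨hxb, rfl⟩ | ⟨hxb, rfl⟩
    · -- original step inserted x; reverse it by erasing x
      have hxc : x ∈ insert x b := Finset.mem_insert_self _ _
      have hxx0 : x ≠ x₀ := by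
        have := hboundc x hxc
        omega
      refine ⟨⟨x, hx1, ?_, Or.inr ⟨Finset.mem_insert_of_mem hxc, ?_⟩⟩, hcardi⟩
      · rcases hleg with h1 | h1
        · exact Or.inl h1
        · exact Or.inr (Finset.mem_insert_of_mem (Finset.mem_insert_of_mem h1))
      · rw [Finset.insert_comm, Finset.erase_insert]
        intro hmem
        rcases Finset.mem_insert.mp hmem with h1 | h1
        · exact hxx0 h1
        · exact hxb h1
    · -- original step erased x; reverse it by inserting x
      have hxx0 : x ≠ x₀ := by
        have := hboundb x hxb
        omega
      have hxnc : x ∉ insert x₀ (b.erase x) := by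
        intro hmem
        rcases Finset.mem_insert.mp hmem with h1 | h1
        · exact hxx0 h1
        · exact (Finset.notMem_erase x b) h1
      refine ⟨⟨x, hx1, ?_, Or.inl ⟨hxnc, ?_⟩⟩, hcardi⟩
      · rcases hleg with h1 | h1
        · exact Or.inl h1
        · refine Or.inr (Finset.mem_insert_of_mem (Finset.mem_erase.mpr ⟨by omega, h1⟩))
      · rw [Finset.insert_comm, Finset.insert_erase hxb]

end EastAux

/-- `ℓ̃(n,k)` is nondecreasing in `k` for `0 ≤ k ≤ n`, and `ℓ̃(n,1) = ℓ̃(n-1,n-1) + 1`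
for `n ≥ 1`. -/
theorem east_ellT_monotone_and_rec :
    (∀ n k k' : ℕ, k ≤ k' → k' ≤ n → ellT n k ≤ ellT n k') ∧
    (∀ n : ℕ, 1 ≤ n → ellT n 1 = ellT (n - 1) (n - 1) + 1) := by
  constructor
  · intro n k k' hkk' hk'n
    exact EastAux.mono_aux (EastAux.bddS n) hkk' hk'n
  · intro n hn
    obtain ⟨N, rfl⟩ : ∃ N, n = N + 1 := ⟨n - 1, by omega⟩
    have hred : N + 1 - 1 = N := by omega
    rw [hred]
    have hub : sSup (EastAux.S (N + 1) 1) ≤ sSup (EastAux.S N N) + 1 :=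
      csSup_le' (fun m hm => EastAux.upper1' (fun j => EastAux.bddS N j) m hm)
    have hlb : (sSup (EastAux.S N N) + 1) ∈ EastAux.S (N + 1) 1 := by
      by_cases hne : (EastAux.S N N).Nonempty
      · have hLmem := Nat.sSup_mem hne (EastAux.bddS N N)
        obtain ⟨s, ⟨hr, hcardN⟩, hmemL⟩ := hLmem
        set L := sSup (EastAux.S N N) with hLdef
        set x₀ : ℤ := -((L : ℤ) + 1) with hx0
        have hx0s : x₀ ∉ s := by
          intro hmem
          have := EastAux.depth_le hr hmem
          omega
        have hstep : EastStep (N + 1) s (insert x₀ s) := by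
          refine ⟨⟨x₀, by omega, Or.inr ?_, Or.inl ⟨hx0s, rfl⟩⟩, ?_⟩
          · have hco : x₀ + 1 = -(L : ℤ) := by omega
            rw [hco]; exact hmemL
          · rw [Finset.card_insert_of_notMem hx0s]
            omega
        have hpath : EastReach (N + 1) {x₀} := by
          have h1 : Relation.ReflTransGen (EastStep (N + 1)) ∅ s :=
            EastAux.reach_mono (Nat.le_succ N) hr
          exact (h1.tail hstep).trans (EastAux.rev_lift rfl s hr)
        refine ⟨{x₀}, ⟨hpath, Finset.card_singleton _⟩, ?_⟩
        simp only [Finset.mem_singleton]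
        push_cast
        omega
      · have h0 : sSup (EastAux.S N N) = 0 := by
          rw [Set.not_nonempty_iff_eq_empty.mp hne]
          exact csSup_empty
        rw [h0]
        refine ⟨{(-1 : ℤ)}, ⟨Relation.ReflTransGen.single
          ⟨⟨-1, le_refl _, Or.inl rfl, Or.inl ⟨by simp, by simp⟩⟩, by simp⟩,
          Finset.card_singleton _⟩, by simp⟩
    have hge := le_csSup (EastAux.bddS (N + 1) 1) hlb
    exact le_antisymm hub hge
end

section
/- With ℓ̃ defined via the East model reachability under at most n simultaneous zeros, the superadditivity inequality ℓ̃(n,k) ≥ Σ_{j=1}^{k} ℓ̃(n−j+1, 1) holds for all n ≥ k ≥ 1. -/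
/-- One East flip without any cardinality cap. -/
def RawStep (s s' : Finset ℤ) : Prop :=
  ∃ x : ℤ, x ≤ -1 ∧ (x = -1 ∨ (x + 1) ∈ s) ∧
      ((x ∉ s ∧ s' = insert x s) ∨ (x ∈ s ∧ s' = s.erase x))

/-- number of vacancies in the open interval `(b,a)`. -/
def rcard (b a : ℤ) (s : Finset ℤ) : ℕ := (s.filter (fun x => b < x ∧ x < a)).card

lemma mem_rfilter {b a : ℤ} {s : Finset ℤ} {x : ℤ} :
    x ∈ s.filter (fun x => b < x ∧ x < a) ↔ x ∈ s ∧ b < x ∧ x < a := by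
  simp [Finset.mem_filter]

lemma rcard_pos {b a : ℤ} {s : Finset ℤ} {x : ℤ} (hx : x ∈ s) (h1 : b < x) (h2 : x < a) :
    1 ≤ rcard b a s := by
  have h : x ∈ s.filter (fun x => b < x ∧ x < a) := mem_rfilter.2 ⟨hx, h1, h2⟩
  exact Finset.card_pos.2 ⟨x, h⟩

/-- Two distinct elements in the region give `rcard ≥ 2`. -/
lemma rcard_two {b a : ℤ} {s : Finset ℤ} {x y : ℤ} (hx : x ∈ s) (h1 : b < x) (h2 : x < a)
    (hy : y ∈ s) (h3 : b < y) (h4 : y < a) (hxy : x ≠ y) : 2 ≤ rcard b a s := by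
  classical
  have hxf : x ∈ s.filter (fun x => b < x ∧ x < a) := mem_rfilter.2 ⟨hx, h1, h2⟩
  have hyf : y ∈ s.filter (fun x => b < x ∧ x < a) := mem_rfilter.2 ⟨hy, h3, h4⟩
  have : ({x, y} : Finset ℤ) ⊆ s.filter (fun x => b < x ∧ x < a) := by
    intro z hz; rcases Finset.mem_insert.1 hz with rfl | hz
    · exact hxf
    · rcases Finset.mem_singleton.1 hz with rfl; exact hyf
  calc 2 = ({x, y} : Finset ℤ).card := (Finset.card_pair hxy).symm
  _ ≤ _ := Finset.card_le_card this


lemma rcard_le_of_subset {b a : ℤ} {s s' : Finset ℤ} (h : s' ⊆ s) :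
    rcard b a s' ≤ rcard b a s :=
  Finset.card_le_card (Finset.filter_subset_filter _ h)

lemma rcard_insert_out {b a y : ℤ} {s : Finset ℤ} (h : ¬(b < y ∧ y < a)) :
    rcard b a (insert y s) = rcard b a s := by
  unfold rcard
  rw [Finset.filter_insert, if_neg h]

/-- an anchored vacancy `v` costs one unit of the budget of the enclosing region. -/
lemma rcard_anchor_right {b a v : ℤ} {s : Finset ℤ} (hv : v ∈ s) (h1 : b < v) (h2 : v < a) :
    rcard v a s + 1 ≤ rcard b a s := by
  classical
  have hsub : insert v (s.filter (fun x => v < x ∧ x < a)) ⊆ s.filter (fun x => b < x ∧ x < a) := by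
    intro x hx
    rcases Finset.mem_insert.1 hx with rfl | hx
    · exact mem_rfilter.2 ⟨hv, h1, h2⟩
    · rcases mem_rfilter.1 hx with ⟨hxs, hx1, hx2⟩
      exact mem_rfilter.2 ⟨hxs, by linarith, hx2⟩
  have hvn : v ∉ s.filter (fun x => v < x ∧ x < a) := by
    intro hvm; rcases mem_rfilter.1 hvm with ⟨_, hlt, _⟩; exact lt_irrefl _ hlt
  have h := Finset.card_le_card hsub
  rw [Finset.card_insert_of_notMem hvn] at h
  exact h

lemma rcard_anchor_left {b a v : ℤ} {s : Finset ℤ} (hv : v ∈ s) (h1 : b < v) (h2 : v < a) :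
    rcard b v s + 1 ≤ rcard b a s := by
  classical
  have hsub : insert v (s.filter (fun x => b < x ∧ x < v)) ⊆ s.filter (fun x => b < x ∧ x < a) := by
    intro x hx
    rcases Finset.mem_insert.1 hx with rfl | hx
    · exact mem_rfilter.2 ⟨hv, h1, h2⟩
    · rcases mem_rfilter.1 hx with ⟨hxs, hx1, hx2⟩
      exact mem_rfilter.2 ⟨hxs, hx1, by linarith⟩
  have hvn : v ∉ s.filter (fun x => b < x ∧ x < v) := by
    intro hvm; rcases mem_rfilter.1 hvm with ⟨_, _, hlt⟩; exact lt_irrefl _ hlt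
  have h := Finset.card_le_card hsub
  rw [Finset.card_insert_of_notMem hvn] at h
  exact h

theorem GP (N : ℕ) : ∀ (σ : ℕ → Finset ℤ) (t₀ T : ℕ) (b a μ : ℤ),
    a ≤ 0 → μ ≤ a →
    (∀ t, t₀ ≤ t → t < T → RawStep (σ t) (σ (t+1))) →
    (∀ t, t₀ ≤ t → t ≤ T → rcard b a (σ t) ≤ N) →
    (∀ x ∈ σ t₀, b < x → x < a → μ ≤ x) →
    ∀ t, t₀ ≤ t → t ≤ T → ∀ x ∈ σ t, b < x → x < a → μ - (3 ^ N - 1) ≤ x := by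
  induction N using Nat.strong_induction_on with
  | _ N IH =>
  match N with
  | 0 =>
    intro σ t₀ T b a μ _ _ _ hbud _ t ht₀ htT x hx h1 h2
    exact absurd ((rcard_pos hx h1 h2).trans (hbud t ht₀ htT)) (by norm_num)
  | 1 =>
    intro σ t₀ T b a μ ha hμa hstep hbud hinit
    have key : ∀ t, t₀ ≤ t → t ≤ T → ∀ x ∈ σ t, b < x → x < a → min μ (a - 1) ≤ x := by
      intro t ht₀
      induction t, ht₀ using Nat.le_induction with
      | base =>
        intro _ x hx h1 h2; exact le_trans (min_le_left _ _) (hinit x hx h1 h2)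
      | succ t ht₀ ih =>
        intro htT x hx h1 h2
        have htT' : t < T := htT
        obtain ⟨y, hy1, hy2, hy3⟩ := hstep t ht₀ htT'
        rcases hy3 with ⟨hyn, he⟩ | ⟨hyn, he⟩
        · rw [he] at hx
          rcases Finset.mem_insert.1 hx with rfl | hx
          · -- x is the new insertion
            rcases hy2 with rfl | hy2
            · exact le_trans (min_le_right _ _) (by linarith)
            · -- x+1 ∈ σ t ; if x+1 < a it's in the region at t+1 too: contradiction with budget 1
              by_cases hcase : x + 1 < a
              · have hx1 : x + 1 ∈ σ (t+1) := by rw [he]; exact Finset.mem_insert_of_mem hy2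
                have hxx : x ∈ σ (t+1) := by rw [he]; exact Finset.mem_insert_self _ _
                have := rcard_two hxx h1 h2 hx1 (by linarith) hcase (by omega)
                exact absurd (this.trans (hbud (t+1) (by omega) htT)) (by norm_num)
              · exact le_trans (min_le_right _ _) (by omega)
          · exact ih (le_of_lt htT') x hx h1 h2
        · rw [he] at hx
          exact ih (le_of_lt htT') x (Finset.mem_of_mem_erase hx) h1 h2
    intro t ht₀ htT x hx h1 h2
    have hm := key t ht₀ htT x hx h1 h2
    have h31 : (3:ℤ) ^ 1 - 1 = 2 := by norm_num
    rw [h31]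
    rcases min_cases μ (a-1) with ⟨he, _⟩ | ⟨he, _⟩ <;> rw [he] at hm <;> linarith
  | (M + 2) =>
    intro σ t₀ T b a μ ha hμa hstep hbud hinit
    have hIH := IH (M+1) (by omega)
    set CM : ℤ := 3 ^ (M+1) - 1 with hCMdef
    have hCM2 : 2 ≤ CM := by
      have h1 : (3:ℤ) ^ 1 ≤ 3 ^ (M+1) := pow_le_pow_right₀ (by norm_num) (by omega)
      simp at h1; omega
    have hpow : (3:ℤ) ^ (M+2) - 1 = 3 * CM + 2 := by
      have h3 : (3:ℤ) ^ (M+2) = 3 * 3 ^ (M+1) := by rw [pow_succ]; ring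
      rw [h3, hCMdef]; ring
    by_contra hcon
    push_neg at hcon
    obtain ⟨T', hT'0, hT'T, x₁, hx₁mem, hb₁, ha₁, hviol⟩ := hcon
    rw [hpow] at hviol
    set c : ℤ := μ - CM - 1 with hcdef
    have hcneg : c ≤ -3 := by omega
    have hca : c < a := by omega
    have hx₁c : x₁ < c := by omega
    by_cases hcb : c ≤ b
    · omega
    push_neg at hcb
    have hT'ne : t₀ ≠ T' := by
      rintro rfl
      have := hinit x₁ hx₁mem hb₁ ha₁; omega
    have hT'gt : t₀ < T' := lt_of_le_of_ne hT'0 hT'ne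
    set P : ℕ → Prop := fun u => ∀ x ∈ σ (t₀ + u), b < x → c < x with hPdef
    have hP0 : P 0 := by
      intro x hx hbx
      simp only [Nat.add_zero] at hx
      by_cases hxa : x < a
      · have := hinit x hx hbx hxa; omega
      · omega
    set τu := Nat.findGreatest P (T' - 1 - t₀) with hτudef
    set τ := t₀ + τu with hτdef
    have hτP : P τu := Nat.findGreatest_spec (Nat.zero_le _) hP0
    have hτle : τu ≤ T' - 1 - t₀ := Nat.findGreatest_le _
    have hτT' : τ < T' := by omega
    have hτmax : ∀ t, τ < t → t ≤ T' → ¬ (∀ x ∈ σ t, b < x → c < x) := by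
      intro t ht1 ht2 hP'
      by_cases htT' : t = T'
      · subst htT'; exact absurd (hP' x₁ hx₁mem hb₁) (by omega)
      · have h2 : t - t₀ ≤ T' - 1 - t₀ := by omega
        have h3 := Nat.findGreatest_is_greatest (P := P) (by omega : τu < t - t₀) h2
        apply h3
        intro x hx
        have h4 : t₀ + (t - t₀) = t := by omega
        rw [h4] at hx
        exact hP' x hx
    have hstepτ := hstep τ (by omega) (by omega)
    obtain ⟨y, hy1, hy2, hy3⟩ := hstepτ
    have hDτ1 : ¬ (∀ x ∈ σ (τ+1), b < x → c < x) := hτmax (τ+1) (by omega) (by omega)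
    have hτPτ : ∀ x ∈ σ τ, b < x → c < x := hτP
    have hyins : y ∉ σ τ ∧ σ (τ+1) = insert y (σ τ) ∧ y = c := by
      rcases hy3 with ⟨hyn, he⟩ | ⟨hyn, he⟩
      · refine ⟨hyn, he, ?_⟩
        have hex : ∃ x ∈ σ (τ+1), b < x ∧ ¬ (c < x) := by
          by_contra hno
          push_neg at hno
          exact hDτ1 (fun x hx hbx => hno x hx hbx)
        obtain ⟨x, hx, hbx, hcx⟩ := hex
        rw [he] at hx
        rcases Finset.mem_insert.1 hx with hxy | hx
        · rcases hy2 with rfl | hy2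
          · omega
          · have hy1c : b < y + 1 := by omega
            have := hτPτ (y+1) hy2 hy1c
            omega
        · exact absurd (hτPτ x hx hbx) (by omega)
      · exfalso
        apply hDτ1
        intro x hx hbx
        rw [he] at hx
        exact hτPτ x (Finset.mem_of_mem_erase hx) hbx
    obtain ⟨hyno, hτeq, rfl⟩ := hyins
    have hF1 : ∀ x ∈ σ (τ+1), b < x → x < c → False := by
      intro x hx hbx hxc
      rw [hτeq] at hx
      rcases Finset.mem_insert.1 hx with rfl | hx
      · omega
      · exact absurd (hτPτ x hx hbx) (by omega)
    by_cases hQ : ∃ t, (τ+1 ≤ t ∧ t ≤ T') ∧ M + 2 ≤ rcard b c (σ t)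
    · -- there is a first time `t'` at which the budget strictly below `c` is full
      have ht'spec := Nat.find_spec hQ
      set t' := Nat.find hQ with ht'def
      obtain ⟨⟨ht'1, ht'2⟩, ht'r⟩ := ht'spec
      have hQless : ∀ t, τ+1 ≤ t → t < t' → rcard b c (σ t) ≤ M+1 := by
        intro t h1 h2
        by_contra hcc
        exact Nat.find_min hQ h2 ⟨⟨h1, by omega⟩, by omega⟩
      have hrc0 : rcard b c (σ (τ+1)) = 0 := by
        unfold rcard
        rw [Finset.card_eq_zero, Finset.filter_eq_empty_iff]
        intro x hx hpx
        exact hF1 x hx hpx.1 hpx.2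
      have ht'gt : τ + 1 < t' := by
        rcases lt_or_eq_of_le ht'1 with h | h
        · exact h
        · rw [← h] at ht'r; omega
      -- recurse on `(b, c)` over `[τ+1, t'-1]`
      have W1 := hIH σ (τ+1) (t'-1) b c c (by omega) le_rfl
        (fun t h1 h2 => hstep t (by omega) (by omega))
        (fun t h1 h2 => hQless t h1 (by omega))
        (fun x hx h1 h2 => absurd (hF1 x hx h1 h2) not_false)
      -- the move into t' and the resulting bound on everything below c at t'
      have hrw : t' - 1 + 1 = t' := by omega
      have hstep' := hstep (t'-1) (by omega) (by omega)
      rw [hrw] at hstep'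
      obtain ⟨z, hz1, hz2, hz3⟩ := hstep'
      have F2 : ∀ x ∈ σ t', b < x → x < c → c - CM - 1 ≤ x := by
        rcases hz3 with ⟨hzn, he⟩ | ⟨hzn, he⟩
        · by_cases hzin : b < z ∧ z < c
          · -- z is the new, genuinely deep, vacancy
            have hzbd : c - CM - 1 ≤ z := by
              rcases hz2 with rfl | hz2
              · omega
              · by_cases hzc : z + 1 < c
                · have := W1 (t'-1) (by omega) le_rfl (z+1) hz2 (by omega) hzc
                  omega
                · omega
            intro x hx h1 h2
            rw [he] at hx
            rcases Finset.mem_insert.1 hx with hxz | hx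
            · omega
            · have := W1 (t'-1) (by omega) le_rfl x hx h1 h2; omega
          · exfalso
            have h0 : rcard b c (σ t') = rcard b c (σ (t'-1)) := by rw [he]; exact rcard_insert_out hzin
            have := hQless (t'-1) (by omega) (by omega)
            omega
        · exfalso
          have h0 : rcard b c (σ t') ≤ rcard b c (σ (t'-1)) := by
            rw [he]; exact rcard_le_of_subset (Finset.erase_subset _ _)
          have := hQless (t'-1) (by omega) (by omega)
          omega
      -- at t' the whole budget sits strictly below c
      have F3 : ∀ x ∈ σ t', b < x → x < a → x < c := by
        have hsub : (σ t').filter (fun x => b < x ∧ x < c) ⊆ (σ t').filter (fun x => b < x ∧ x < a) := by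
          intro x hx
          rcases mem_rfilter.1 hx with ⟨hxs, h1, h2⟩
          exact mem_rfilter.2 ⟨hxs, h1, by omega⟩
        have hcardle : ((σ t').filter (fun x => b < x ∧ x < a)).card ≤ ((σ t').filter (fun x => b < x ∧ x < c)).card := by
          have h1 := hbud t' (by omega) (by omega)
          have h2 := ht'r
          unfold rcard at h2 h1
          omega
        have heq := Finset.eq_of_subset_of_card_le hsub hcardle
        intro x hx h1 h2
        have : x ∈ (σ t').filter (fun x => b < x ∧ x < a) := mem_rfilter.2 ⟨hx, h1, h2⟩
        rw [← heq] at this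
        exact (mem_rfilter.1 this).2.2
      -- the shallowest deep vacancy v at time t'
      have hFne : ((σ t').filter (fun x => b < x ∧ x < c)).Nonempty := by
        rw [← Finset.card_pos]
        unfold rcard at ht'r; omega
      set v := ((σ t').filter (fun x => b < x ∧ x < c)).max' hFne with hvdef
      have hvmem2 : v ∈ (σ t').filter (fun x => b < x ∧ x < c) := by
        rw [hvdef]; exact Finset.max'_mem _ hFne
      obtain ⟨hvs, hvb, hvc⟩ := mem_rfilter.1 hvmem2
      have hvmax : ∀ x ∈ σ t', b < x → x < c → x ≤ v := by
        intro x hx h1 h2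
        rw [hvdef]
        exact Finset.le_max' _ x (mem_rfilter.2 ⟨hx, h1, h2⟩)
      have hvlb : c - CM - 1 ≤ v := F2 v hvs hvb hvc
      -- v stays vacant, and the zone (v, c) stays empty, through time T'
      have hGood : ∀ t, t' ≤ t → t ≤ T' → v ∈ σ t ∧ ∀ x ∈ σ t, v < x → x < c → False := by
        by_contra hbad
        push_neg at hbad
        obtain ⟨t₂', h1, h2, h3⟩ := hbad
        have hEx2 : ∃ t, t' ≤ t ∧ t ≤ T' ∧ ¬(v ∈ σ t ∧ ∀ x ∈ σ t, v < x → x < c → False) := by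
          refine ⟨t₂', h1, h2, ?_⟩
          intro hg
          obtain ⟨x, hx, h4, h5, _⟩ := h3 hg.1
          exact hg.2 x hx h4 h5
        have ht₂spec := Nat.find_spec hEx2
        set t₂ := Nat.find hEx2 with ht₂def
        obtain ⟨ht₂1, ht₂2, ht₂bad⟩ := ht₂spec
        have hGd : ∀ t, t' ≤ t → t < t₂ → v ∈ σ t ∧ ∀ x ∈ σ t, v < x → x < c → False := by
          intro t h1' h2'
          have hnot := Nat.find_min hEx2 h2'
          by_contra hgg
          exact hnot ⟨h1', by omega, hgg⟩
        have ht₂gt : t' < t₂ := by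
          rcases lt_or_eq_of_le ht₂1 with h | h
          · exact h
          · exfalso; apply ht₂bad
            rw [← h]
            exact ⟨hvs, fun x hx hv hc => absurd (hvmax x hx (by omega) hc) (by omega)⟩
        -- recurse on (v, a) over [t', t₂ - 1]
        have W2 := hIH σ t' (t₂-1) v a a ha le_rfl
          (fun t h1' h2' => hstep t (by omega) (by omega))
          (fun t h1' h2' => by
            have hvmem := (hGd t h1' (by omega)).1
            have := rcard_anchor_right hvmem hvb (by omega : v < a) (s := σ t)
            have := hbud t (by omega) (by omega)
            omega)
          (fun x hx h1' h2' => by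
            exfalso
            exact absurd (hvmax x hx (by omega) (F3 x hx (by omega) h2')) (by omega))
        have hrw2 : t₂ - 1 + 1 = t₂ := by omega
        have hstep2 := hstep (t₂-1) (by omega) (by omega)
        rw [hrw2] at hstep2
        obtain ⟨w, hw1, hw2, hw3⟩ := hstep2
        have hGt₂1 := hGd (t₂-1) (by omega) (by omega)
        -- the anchor w+1 can live neither in (v,c) nor at c
        have hanchor : ∀ w' : ℤ, v ≤ w' → w' < c → w' + 1 ∈ σ (t₂-1) → False := by
          intro w' hw'1 hw'2 hw'mem
          by_cases hwc : w' + 1 < c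
          · exact hGt₂1.2 (w'+1) hw'mem (by omega) hwc
          · -- w' + 1 = c , but c is never vacant on [t', t₂-1]
            have hcw : w' + 1 = c := by omega
            have := W2 (t₂-1) (by omega) le_rfl (w'+1) hw'mem (by omega) (by omega)
            omega
        apply ht₂bad
        rcases hw3 with ⟨hwn, he⟩ | ⟨hwn, he⟩
        · constructor
          · rw [he]; exact Finset.mem_insert_of_mem hGt₂1.1
          · intro x hx h1' h2'
            rw [he] at hx
            rcases Finset.mem_insert.1 hx with hxw | hx
            · subst hxw
              rcases hw2 with rfl | hw2
              · omega
              · exact hanchor x (by omega) h2' hw2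
            · exact hGt₂1.2 x hx h1' h2'
        · constructor
          · rw [he]
            refine Finset.mem_erase.2 ⟨?_, hGt₂1.1⟩
            intro hvw
            subst hvw
            rcases hw2 with hm | hw2
            · omega
            · exact hanchor v le_rfl hvc hw2
          · intro x hx h1' h2'
            rw [he] at hx
            exact hGt₂1.2 x (Finset.mem_of_mem_erase hx) h1' h2'
      -- final two recursions on [t', T']
      have W3 := hIH σ t' T' v a a ha le_rfl
        (fun t h1' h2' => hstep t (by omega) (by omega))
        (fun t h1' h2' => by
          have hvmem := (hGood t h1' h2').1
          have := rcard_anchor_right hvmem hvb (by omega : v < a) (s := σ t)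
          have := hbud t (by omega) (by omega)
          omega)
        (fun x hx h1' h2' => by
          exfalso
          exact absurd (hvmax x hx (by omega) (F3 x hx (by omega) h2')) (by omega))
      have W4 := hIH σ t' T' b v (c - CM - 1) (by omega) hvlb
        (fun t h1' h2' => hstep t (by omega) (by omega))
        (fun t h1' h2' => by
          have hvmem := (hGood t h1' h2').1
          have := rcard_anchor_left hvmem hvb (by omega : v < a) (s := σ t)
          have := hbud t (by omega) (by omega)
          omega)
        (fun x hx h1' h2' => F2 x hx h1' (by omega))
      rcases lt_trichotomy x₁ v with hlt | heq | hgt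
      · have := W4 T' (by omega) le_rfl x₁ hx₁mem hb₁ hlt
        omega
      · omega
      · have := W3 T' (by omega) le_rfl x₁ hx₁mem hgt ha₁
        omega

    · push_neg at hQ
      have hW := hIH σ (τ+1) T' b c c (by omega) le_rfl
        (fun t ht1 ht2 => hstep t (by omega) (by omega))
        (fun t ht1 ht2 => by have := hQ t ⟨ht1, ht2⟩; omega)
        (fun x hx h1 h2 => absurd (hF1 x hx h1 h2) not_false)
      have := hW T' (by omega) le_rfl x₁ hx₁mem hb₁ hx₁c
      omega


lemma EastStep.raw {n : ℕ} {s s' : Finset ℤ} (h : EastStep n s s') : RawStep s s' := h.1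

lemma RawStep.neg {s s' : Finset ℤ} (h : RawStep s s') (hs : ∀ x ∈ s, x ≤ -1) :
    ∀ x ∈ s', x ≤ -1 := by
  obtain ⟨y, hy1, _, h3⟩ := h
  rcases h3 with ⟨_, rfl⟩ | ⟨_, rfl⟩
  · intro x hx
    rcases Finset.mem_insert.1 hx with rfl | hx
    · exact hy1
    · exact hs x hx
  · exact fun x hx => hs x (Finset.mem_of_mem_erase hx)

lemma EastReach.neg {n : ℕ} {s : Finset ℤ} (h : EastReach n s) : ∀ x ∈ s, x ≤ -1 := by
  induction h with
  | refl => simp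
  | tail _ hstep ih => exact hstep.raw.neg ih

lemma EastReach.path {n : ℕ} {s : Finset ℤ} (h : EastReach n s) :
    ∃ (T : ℕ) (σ : ℕ → Finset ℤ), σ 0 = ∅ ∧ σ T = s ∧
      (∀ t, t < T → RawStep (σ t) (σ (t+1))) ∧ (∀ t, t ≤ T → (σ t).card ≤ n) := by
  induction h with
  | refl =>
    exact ⟨0, fun _ => ∅, rfl, rfl, by omega, by simp⟩
  | @tail u v _ hstep ih =>
    obtain ⟨T, σ, h0, hT, hsteps, hcard⟩ := ih
    refine ⟨T + 1, fun t => if t ≤ T then σ t else v, by simp [h0], by simp, ?_, ?_⟩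
    · intro t ht
      by_cases h1 : t + 1 ≤ T
      · simpa [show t ≤ T by omega, h1] using hsteps t (by omega)
      · have h2 : t = T := by omega
        subst h2
        simp only [le_refl, if_pos, if_neg h1]
        rw [hT]
        exact hstep.raw
    · intro t ht
      by_cases h1 : t ≤ T
      · simpa [h1] using hcard t h1
      · simpa [h1] using hstep.2

/-- The key global bound: any configuration reachable with at most `n` simultaneous
vacancies lies within distance `3^n - 1` from the origin. -/
theorem EastReach.bounded {n : ℕ} {s : Finset ℤ} (h : EastReach n s) :
    ∀ x ∈ s, -(3 ^ n - 1 : ℤ) ≤ x := by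
  classical
  obtain ⟨T, σ, h0, hT, hsteps, hcard⟩ := h.path
  have hneg : ∀ x ∈ s, x ≤ -1 := h.neg
  set U : Finset ℤ := (Finset.range (T+1)).biUnion σ with hU
  set b : ℤ := (insert 0 U).min' (Finset.insert_nonempty _ _) - 1 with hb
  have hbx : ∀ t, t ≤ T → ∀ x ∈ σ t, b < x := by
    intro t ht x hx
    have hx' : x ∈ insert 0 U := by
      refine Finset.mem_insert_of_mem ?_
      exact Finset.mem_biUnion.2 ⟨t, Finset.mem_range.2 (by omega), hx⟩
    have := Finset.min'_le _ x hx'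
    omega
  have hGP := GP n σ 0 T b 0 0 le_rfl le_rfl
    (fun t _ ht => hsteps t ht)
    (fun t _ ht => by
      calc rcard b 0 (σ t) ≤ (σ t).card := Finset.card_filter_le _ _
      _ ≤ n := hcard t ht)
    (by rw [h0]; simp)
  intro x hx
  have h1 : x < 0 := by have := hneg x hx; omega
  have h2 : b < x := hbx T le_rfl x (by rwa [hT])
  have := hGP T (Nat.zero_le _) le_rfl x (by rwa [hT]) h2 h1
  omega

/-- Anchoring: a reachability path for the East model with budget `m` can be replayed,
shifted by `A`, below an anchor configuration `t` whose zeros all lie at or above `A`. -/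
lemma EastReach.lift {m n : ℕ} {s : Finset ℤ} (h : EastReach m s)
    (t : Finset ℤ) (A : ℤ) (hA : A ≤ 0) (hAt : A = 0 ∨ A ∈ t)
    (ht1 : ∀ y ∈ t, A ≤ y) (hcap : t.card + m ≤ n) :
    Relation.ReflTransGen (EastStep n) t (t ∪ s.image (· + A)) := by
  have hinj : Function.Injective (· + A) := add_left_injective A
  suffices hgen : (∀ x ∈ s, x ≤ -1) ∧
      Relation.ReflTransGen (EastStep n) t (t ∪ s.image (· + A)) from hgen.2
  induction h with
  | refl =>
    constructor
    · simp
    · rw [Finset.image_empty, Finset.union_empty]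
  | @tail u v hru hstep ih =>
    obtain ⟨hnegu, hpath⟩ := ih
    obtain ⟨⟨x, hx1, hx2, hx3⟩, hcardv⟩ := hstep
    have hnegv : ∀ z ∈ v, z ≤ -1 := RawStep.neg ⟨x, hx1, hx2, hx3⟩ hnegu
    refine ⟨hnegv, hpath.tail ?_⟩
    have hxA : x + A ∉ t := by
      intro hmem
      have := ht1 _ hmem
      omega
    refine ⟨⟨x + A, by omega, ?_, ?_⟩, ?_⟩
    · -- constraint
      rcases hx2 with rfl | hx2
      · rcases hAt with rfl | hAin
        · left; ring
        · right
          have h1 : -1 + A + 1 = A := by ring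
          rw [h1]
          exact Finset.mem_union_left _ hAin
      · right
        have h1 : x + A + 1 = (x + 1) + A := by ring
        rw [h1]
        exact Finset.mem_union_right _ (Finset.mem_image.2 ⟨x + 1, hx2, rfl⟩)
    · -- flip
      rcases hx3 with ⟨hxn, rfl⟩ | ⟨hxin, rfl⟩
      · left
        constructor
        · intro hmem
          rcases Finset.mem_union.1 hmem with hmem | hmem
          · exact hxA hmem
          · obtain ⟨z, hz, hze⟩ := Finset.mem_image.1 hmem
            have : z = x := hinj hze
            subst this
            exact hxn hz
        · rw [Finset.image_insert, Finset.union_insert]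
      · right
        constructor
        · exact Finset.mem_union_right _ (Finset.mem_image.2 ⟨x, hxin, rfl⟩)
        · rw [Finset.image_erase hinj]
          ext z
          simp only [Finset.mem_union, Finset.mem_erase]
          constructor
          · rintro (hz | ⟨hne, hz⟩)
            · exact ⟨fun he => hxA (he ▸ hz), Or.inl hz⟩
            · exact ⟨hne, Or.inr hz⟩
          · rintro ⟨hne, hz | hz⟩
            · exact Or.inl hz
            · exact Or.inr ⟨hne, hz⟩
    · -- cardinality
      calc (t ∪ v.image (· + A)).card ≤ t.card + (v.image (· + A)).card := Finset.card_union_le _ _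
      _ ≤ t.card + v.card := by
          have := Finset.card_image_le (s := v) (f := (· + A))
          omega
      _ ≤ t.card + m := by omega
      _ ≤ n := hcap

/-- Superadditivity: `ℓ̃(n,k) ≥ Σ_{j=1}^{k} ℓ̃(n-j+1, 1)` for all `n ≥ k ≥ 1`. -/
theorem east_ellT_superadditive (n k : ℕ) (hk : 1 ≤ k) (hkn : k ≤ n) :
    ∑ j ∈ Finset.Icc 1 k, ellT (n - j + 1) 1 ≤ ellT n k := by
  classical
  set L : ℕ → ℕ := fun j => ellT (n - j + 1) 1 with hL
  set Pt : ℕ → ℕ := fun j => ∑ i ∈ Finset.Icc 1 j, L i with hPt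
  -- basic facts about the single-vacancy suprema
  have hSfact : ∀ j, 1 ≤ j → j ≤ k →
      (∃ s : Finset ℤ, Vnk (n - j + 1) 1 s ∧ -((L j : ℤ)) ∈ s) ∧ 1 ≤ L j := by
    intro j hj1 hjk
    set ν := n - j + 1 with hν
    have hne : ({m : ℕ | ∃ s : Finset ℤ, Vnk ν 1 s ∧ -(m : ℤ) ∈ s}).Nonempty := by
      refine ⟨1, {(-1 : ℤ)}, ⟨?_, by simp⟩, by simp⟩
      exact Relation.ReflTransGen.single
        ⟨⟨-1, le_rfl, Or.inl rfl, Or.inl ⟨by simp, by simp⟩⟩, by simp [hν]⟩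
    have hbdd : BddAbove ({m : ℕ | ∃ s : Finset ℤ, Vnk ν 1 s ∧ -(m : ℤ) ∈ s}) := by
      refine ⟨3 ^ ν, ?_⟩
      rintro m ⟨s, ⟨hreach, _⟩, hmem⟩
      have := hreach.bounded _ hmem
      have hm : (m : ℤ) ≤ 3 ^ ν - 1 := by omega
      have h3 : ((3 ^ ν : ℕ) : ℤ) = (3 : ℤ) ^ ν := by push_cast; ring
      have : (m : ℤ) ≤ ((3 ^ ν : ℕ) : ℤ) := by omega
      exact_mod_cast this
    have hmem := Nat.sSup_mem hne hbdd
    have hLj : L j = sSup {m : ℕ | ∃ s : Finset ℤ, Vnk ν 1 s ∧ -(m : ℤ) ∈ s} := rfl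
    rw [← hLj] at hmem
    obtain ⟨s, hVs, hms⟩ := hmem
    refine ⟨⟨s, hVs, hms⟩, ?_⟩
    have := hVs.1.neg _ hms
    omega
  -- build the nested anchored configuration
  have hbuild : ∀ j, j ≤ k → ∃ t : Finset ℤ, EastReach n t ∧ t.card = j ∧
      (∀ y ∈ t, -((Pt j : ℤ)) ≤ y ∧ y ≤ -1) ∧ (1 ≤ j → -((Pt j : ℤ)) ∈ t) := by
    intro j
    induction j with
    | zero =>
      intro _
      exact ⟨∅, Relation.ReflTransGen.refl, by simp, by simp, by omega⟩
    | succ j ihj =>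
      intro hjk
      obtain ⟨t, htreach, htcard, htbd, htanch⟩ := ihj (by omega)
      obtain ⟨⟨s, ⟨hsreach, hscard⟩, hsmem⟩, hsL⟩ := hSfact (j+1) (by omega) hjk
      -- s = {-(L (j+1))}
      obtain ⟨y0, hy0⟩ := Finset.card_eq_one.1 hscard
      rw [hy0] at hsmem
      have hy0e : y0 = -((L (j+1) : ℤ)) := by
        have := Finset.mem_singleton.1 hsmem; omega
      subst hy0e
      rw [hy0] at hsreach
      have hPsucc : (Pt (j+1) : ℤ) = (Pt j : ℤ) + (L (j+1) : ℤ) := by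
        have : Pt (j+1) = Pt j + L (j+1) := by
          simp only [hPt]
          rw [Finset.sum_Icc_succ_top (by omega : 1 ≤ j + 1)]
        rw [this]; push_cast; ring
      have hlift := hsreach.lift (n := n) t (-(Pt j : ℤ)) (by omega)
        (by
          rcases Nat.eq_zero_or_pos j with rfl | hj
          · left
            simp [hPt]
          · right; exact htanch hj)
        (fun y hy => (htbd y hy).1)
        (by
          have h1 : n - (j+1) + 1 = n - j := by omega
          omega)
      have himg : (({-((L (j+1) : ℤ))} : Finset ℤ).image (· + -(Pt j : ℤ)))
          = {-((Pt (j+1) : ℤ))} := by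
        rw [Finset.image_singleton]
        congr 1
        omega
      rw [himg] at hlift
      refine ⟨t ∪ {-((Pt (j+1) : ℤ))}, htreach.trans hlift, ?_, ?_, ?_⟩
      · have hins : t ∪ {-((Pt (j+1) : ℤ))} = insert (-((Pt (j+1) : ℤ))) t := by
          ext z; simp [or_comm]
        rw [hins, Finset.card_insert_of_notMem, htcard]
        intro hmem
        have := (htbd _ hmem).1
        omega
      · intro y hy
        rcases Finset.mem_union.1 hy with hy | hy
        · have := htbd y hy
          constructor <;> omega
        · have := Finset.mem_singleton.1 hy
          subst this
          constructor
          · omega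
          · omega
      · intro _
        exact Finset.mem_union_right _ (Finset.mem_singleton_self _)
  -- conclude
  obtain ⟨t, htreach, htcard, htbd, htanch⟩ := hbuild k le_rfl
  have hmem : Pt k ∈ {m : ℕ | ∃ s : Finset ℤ, Vnk n k s ∧ -(m : ℤ) ∈ s} :=
    ⟨t, ⟨htreach, htcard⟩, htanch hk⟩
  have hbdd : BddAbove {m : ℕ | ∃ s : Finset ℤ, Vnk n k s ∧ -(m : ℤ) ∈ s} := by
    refine ⟨3 ^ n, ?_⟩
    rintro m ⟨s, ⟨hreach, _⟩, hmem'⟩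
    have := hreach.bounded _ hmem'
    have hm : (m : ℤ) ≤ 3 ^ n - 1 := by omega
    have : (m : ℤ) ≤ ((3 ^ n : ℕ) : ℤ) := by push_cast; omega
    exact_mod_cast this
  exact le_csSup hbdd hmem
end
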